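/- Let A be an AM-algebra with unit e. Then there exist a compact Hausdorff space K and a linear bijection T : A → C(K,ℝ) such that T is isometric (‖Tx‖∞ = ‖x‖ for all x), multiplicative (T(xy) = (Tx)(Ty) for all x, y), a lattice homomorphism (T(x ⊔ y) = Tx ⊔ Ty for all x, y), and satisfies Te = 1 (the constant one function). -/

import Mathlib

open ContinuousMap

namespace AMAlgAux

variable {A : Type*} [NormedAddCommGroup A] [Lattice A] [IsOrderedAddMonoid A] [HasSolidNorm A]
  [NormedSpace ℝ A] [PosSMulStrictMono ℝ A] [PosSMulReflectLT ℝ A]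

/-! ### Basic AM-space facts -/

theorem e_nonneg {e : A} (hOU : ∀ x : A, ∃ l : ℝ, 0 ≤ l ∧ |x| ≤ l • e) : 0 ≤ e := by
  obtain ⟨l, hl, habs⟩ := hOU e
  have h1 : -e ≤ l • e := (neg_le_abs e).trans habs
  have h2 : (0 : A) ≤ (l + 1) • e := by
    rw [add_smul, one_smul, ← neg_le_iff_add_nonneg]
    exact h1
  have h3 : e = (l + 1)⁻¹ • ((l + 1) • e) := by
    rw [smul_smul, inv_mul_cancel₀ (by positivity), one_smul]
  rw [h3]
  exact smul_nonneg (by positivity) h2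

theorem norm_le_of_abs_le {e : A}
    (hAM : ∀ x : A, ‖x‖ = sInf {l : ℝ | 0 < l ∧ |x| ≤ l • e})
    {x : A} {l : ℝ} (hl : 0 ≤ l) (h : |x| ≤ l • e) : ‖x‖ ≤ l := by
  rcases hl.eq_or_lt with rfl | hl'
  · have hx0 : |x| = 0 := le_antisymm (by simpa using h) (abs_nonneg x)
    have h1 : x ≤ 0 := (le_abs_self x).trans hx0.le
    have h2 : -x ≤ 0 := (neg_le_abs x).trans hx0.le
    have : x = 0 := le_antisymm h1 (by simpa using h2)
    simp [this]
  · rw [hAM]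
    exact csInf_le ⟨0, fun m hm => hm.1.le⟩ ⟨hl', h⟩

theorem abs_le_norm_smul {e : A}
    (hOU : ∀ x : A, ∃ l : ℝ, 0 ≤ l ∧ |x| ≤ l • e)
    (hAM : ∀ x : A, ‖x‖ = sInf {l : ℝ | 0 < l ∧ |x| ≤ l • e})
    (x : A) : |x| ≤ ‖x‖ • e := by
  have he := e_nonneg hOU
  set S := {l : ℝ | 0 < l ∧ |x| ≤ l • e} with hS
  have hSne : S.Nonempty := by
    obtain ⟨l, hl, h⟩ := hOU x
    exact ⟨l + 1, by positivity, h.trans (smul_le_smul_of_nonneg_right (by linarith) he)⟩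
  have hSbd : BddBelow S := ⟨0, fun m hm => hm.1.le⟩
  have key : ∀ ε : ℝ, 0 < ε → |x| ≤ (‖x‖ + ε) • e := by
    intro ε hε
    have h1 : sInf S < ‖x‖ + ε := by rw [← hAM x]; linarith
    obtain ⟨m, hmS, hm⟩ := (csInf_lt_iff hSbd hSne).1 h1
    exact hmS.2.trans (smul_le_smul_of_nonneg_right hm.le he)
  have htend : Filter.Tendsto (fun n : ℕ => (‖x‖ + 1 / ((n : ℝ) + 1)) • e)
      Filter.atTop (nhds (‖x‖ • e)) := by
    have h1 : Filter.Tendsto (fun n : ℕ => ‖x‖ + 1 / ((n : ℝ) + 1)) Filter.atTop (nhds ‖x‖) := by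
      simpa using tendsto_const_nhds.add (tendsto_one_div_add_atTop_nhds_zero_nat (𝕜 := ℝ))
    exact h1.smul_const e
  exact ge_of_tendsto' htend fun n => key _ (by positivity)

/-- positive scalar commutes with posPart -/
theorem smul_posPart {c : ℝ} (hc : 0 < c) (x : A) : (c • x)⁺ = c • x⁺ := by
  show (c • x) ⊔ 0 = c • (x ⊔ 0)
  have := (OrderIso.smulRight (β := A) hc).map_sup x 0
  simp only [OrderIso.smulRight_apply] at this
  rw [this, smul_zero]

theorem smul_negPart {c : ℝ} (hc : 0 < c) (x : A) : (c • x)⁻ = c • x⁻ := by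
  show (-(c • x)) ⊔ 0 = c • ((-x) ⊔ 0)
  have := (OrderIso.smulRight (β := A) hc).map_sup (-x) 0
  simp only [OrderIso.smulRight_apply] at this
  rw [this, smul_zero, smul_neg]

theorem inf_add_le {a b c : A} (ha : 0 ≤ a) (hb : 0 ≤ b) (hc : 0 ≤ c) :
    (a + b) ⊓ c ≤ a ⊓ c + b ⊓ c := by
  have add_inf' : ∀ x y z : A, x + y ⊓ z = (x + y) ⊓ (x + z) := fun x y z =>
    (OrderIso.addLeft x).map_inf y z
  have inf_add' : ∀ x y z : A, y ⊓ z + x = (y + x) ⊓ (z + x) := fun x y z =>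
    (OrderIso.addRight x).map_inf y z
  have h1 : a ⊓ c + b ⊓ c = ((a + b) ⊓ (c + b)) ⊓ ((a + c) ⊓ (c + c)) := by
    rw [add_inf' (a ⊓ c) b c, inf_add' b a c, inf_add' c a c]
  rw [h1]
  refine le_inf (le_inf inf_le_left ?_) (le_inf ?_ ?_)
  · exact inf_le_right.trans (le_add_of_nonneg_right hb)
  · exact inf_le_right.trans (le_add_of_nonneg_left ha)
  · exact inf_le_right.trans (le_add_of_nonneg_left hc)

/-! ### Existence of states -/

theorem exists_state {e : A} (he : 0 ≤ e) (hne : ‖e‖ = 1)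
    (hOU : ∀ x : A, ∃ l : ℝ, 0 ≤ l ∧ |x| ≤ l • e)
    (hAM : ∀ x : A, ‖x‖ = sInf {l : ℝ | 0 < l ∧ |x| ≤ l • e})
    (u : A) (hu : 0 ≤ u) :
    ∃ φ : A →ₗ[ℝ] ℝ, (∀ a, 0 ≤ a → 0 ≤ φ a) ∧ φ e = 1 ∧ φ u = ‖u‖ := by
  -- main case: ‖u‖ = 1
  have main : ∀ u : A, 0 ≤ u → ‖u‖ = 1 →
      ∃ φ : A →ₗ[ℝ] ℝ, (∀ a, 0 ≤ a → 0 ≤ φ a) ∧ φ e = 1 ∧ φ u = 1 := by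
    clear hu u
    intro u hu hu1
    have hu0 : u ≠ 0 := fun h => by simp [h] at hu1
    set N : A → ℝ := fun x => ‖x⁺‖ with hN
    have N_hom : ∀ c : ℝ, 0 < c → ∀ x : A, N (c • x) = c * N x := by
      intro c hc x
      rw [hN]
      simp only [smul_posPart hc, norm_smul, Real.norm_eq_abs, abs_of_pos hc]
    have N_add : ∀ x y : A, N (x + y) ≤ N x + N y := by
      intro x y
      have h1 : (x + y)⁺ ≤ x⁺ + y⁺ := by
        refine sup_le (add_le_add le_sup_left le_sup_left) (add_nonneg le_sup_right le_sup_right)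
      calc ‖(x + y)⁺‖ ≤ ‖x⁺ + y⁺‖ := by
            refine norm_le_norm_of_abs_le_abs ?_
            rwa [abs_of_nonneg (posPart_nonneg _),
              abs_of_nonneg (add_nonneg (posPart_nonneg _) (posPart_nonneg _))]
        _ ≤ ‖x⁺‖ + ‖y⁺‖ := norm_add_le _ _
    set f := LinearPMap.mkSpanSingleton (K := ℝ) (L := ℝ) (σ := RingHom.id ℝ) u (1 : ℝ) hu0 with hf
    have hfle : ∀ x : f.domain, f x ≤ N x := by
      rintro ⟨x, hx⟩
      have hx' : x ∈ Submodule.span ℝ {u} := hx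
      obtain ⟨c, rfl⟩ := Submodule.mem_span_singleton.1 hx'
      have hmem : u ∈ f.domain := by
        rw [hf, LinearPMap.domain_mkSpanSingleton]
        exact Submodule.mem_span_singleton_self u
      have happ : f ⟨c • u, hx⟩ = c := by
        have hsub : (⟨c • u, hx⟩ : f.domain) = c • (⟨u, hmem⟩ : f.domain) := by
          ext; rfl
        rw [hsub, f.map_smul]
        have h1 : f ⟨u, hmem⟩ = 1 := LinearPMap.mkSpanSingleton_apply ℝ ℝ hu0 1
        rw [h1, smul_eq_mul, mul_one]
      rw [happ]
      rcases le_or_gt 0 c with hc | hc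
      · have : (c • u)⁺ = c • u := posPart_eq_self.2 (smul_nonneg hc hu)
        show c ≤ N (c • u)
        rw [hN]; simp only [this, norm_smul, Real.norm_eq_abs, abs_of_nonneg hc, hu1, mul_one]
        exact le_rfl
      · exact hc.le.trans (norm_nonneg _)
    obtain ⟨g, hg1, hg2⟩ := exists_extension_of_le_sublinear f N N_hom N_add hfle
    have hgu : g u = 1 := by
      have h := hg1 ⟨u, Submodule.mem_span_singleton_self u⟩
      rwa [LinearPMap.mkSpanSingleton_apply] at h
    have hgpos : ∀ a, 0 ≤ a → 0 ≤ g a := by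
      intro a ha
      have h1 : g (-a) ≤ N (-a) := hg2 (-a)
      have h2 : N (-a) = 0 := by
        have h3 : (-a)⁺ = 0 := posPart_eq_zero.2 (neg_nonpos.2 ha)
        rw [hN]; simp [h3]
      rw [map_neg] at h1; linarith
    have hge : g e = 1 := by
      have h1 : g e ≤ 1 := by
        have h2 := hg2 e
        rw [hN] at h2
        simpa [posPart_eq_self.2 he, hne] using h2
      have h2 : u ≤ e := by
        calc u ≤ |u| := le_abs_self u
          _ ≤ ‖u‖ • e := abs_le_norm_smul hOU hAM u
          _ = e := by rw [hu1, one_smul]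
      have h3 := hgpos _ (sub_nonneg.2 h2)
      rw [map_sub] at h3
      linarith
    exact ⟨g, hgpos, hge, hgu⟩
  rcases eq_or_ne u 0 with rfl | h0
  · obtain ⟨φ, h1, h2, _⟩ := main e he hne
    exact ⟨φ, h1, h2, by simp⟩
  · have hn : 0 < ‖u‖ := norm_pos_iff.2 h0
    obtain ⟨φ, h1, h2, h3⟩ := main (‖u‖⁻¹ • u) (smul_nonneg (by positivity) hu)
      (by rw [norm_smul, Real.norm_eq_abs, abs_of_pos (by positivity), inv_mul_cancel₀ hn.ne'])
    refine ⟨φ, h1, h2, ?_⟩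
    rw [map_smul, smul_eq_mul] at h3
    field_simp at h3
    linarith


/-! ### The state space -/

variable (e : A)

/-- The set of states on `A`. -/
def stateSet : Set (WeakDual ℝ A) := {φ | (∀ a : A, 0 ≤ a → 0 ≤ φ a) ∧ φ e = 1}

variable {e}

theorem state_mono {φ : WeakDual ℝ A} (hφ : φ ∈ stateSet e) {a b : A} (h : a ≤ b) :
    φ a ≤ φ b := by
  have := hφ.1 _ (sub_nonneg.2 h)
  rw [map_sub] at this
  linarith

theorem state_bound
    (hOU : ∀ x : A, ∃ l : ℝ, 0 ≤ l ∧ |x| ≤ l • e)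
    (hAM : ∀ x : A, ‖x‖ = sInf {l : ℝ | 0 < l ∧ |x| ≤ l • e})
    {φ : WeakDual ℝ A} (hφ : φ ∈ stateSet e) (x : A) : |φ x| ≤ ‖x‖ := by
  have k1 : φ x ≤ φ |x| := state_mono hφ (le_abs_self x)
  have k2 : -φ x ≤ φ |x| := by
    have := state_mono hφ (neg_le_abs x)
    rwa [map_neg] at this
  have k3 : φ |x| ≤ ‖x‖ := by
    have := state_mono hφ (abs_le_norm_smul hOU hAM x)
    rwa [map_smul, smul_eq_mul, hφ.2, mul_one] at this
  rw [abs_le]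
  constructor <;> linarith

theorem stateSet_convex : Convex ℝ (stateSet e) := by
  intro φ hφ ψ hψ a b ha hb hab
  constructor
  · intro x hx
    have h1 := hφ.1 x hx
    have h2 := hψ.1 x hx
    have : (a • φ + b • ψ) x = a * φ x + b * ψ x := rfl
    rw [this]
    positivity
  · have : (a • φ + b • ψ) e = a * φ e + b * ψ e := rfl
    rw [this, hφ.2, hψ.2]
    linarith

theorem stateSet_closed : IsClosed (stateSet e) := by
  have h1 : stateSet e = (⋂ a ∈ {a : A | 0 ≤ a}, {φ : WeakDual ℝ A | 0 ≤ φ a}) ∩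
      {φ : WeakDual ℝ A | φ e = 1} := by
    ext φ
    simp only [stateSet, Set.mem_setOf_eq, Set.mem_inter_iff, Set.mem_iInter]
  rw [h1]
  refine IsClosed.inter (isClosed_biInter fun a _ => ?_) ?_
  · exact isClosed_le continuous_const (WeakDual.eval_continuous a)
  · exact isClosed_eq (WeakDual.eval_continuous e) continuous_const

theorem stateSet_compact
    (hOU : ∀ x : A, ∃ l : ℝ, 0 ≤ l ∧ |x| ≤ l • e)
    (hAM : ∀ x : A, ‖x‖ = sInf {l : ℝ | 0 < l ∧ |x| ≤ l • e}) :
    IsCompact (stateSet e) := by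
  refine (WeakDual.isCompact_closedBall (𝕜 := ℝ) 0 1).of_isClosed_subset stateSet_closed ?_
  intro φ hφ
  simp only [Set.mem_preimage, Metric.mem_closedBall, dist_zero_right]
  refine ContinuousLinearMap.opNorm_le_bound _ zero_le_one fun x => ?_
  rw [one_mul]
  simpa [Real.norm_eq_abs] using state_bound hOU hAM hφ x

/-- The norm of a positive element is attained at an extreme state. -/
theorem exists_extreme_state
    (he : 0 ≤ e) (hne : ‖e‖ = 1)
    (hOU : ∀ x : A, ∃ l : ℝ, 0 ≤ l ∧ |x| ≤ l • e)
    (hAM : ∀ x : A, ‖x‖ = sInf {l : ℝ | 0 < l ∧ |x| ≤ l • e})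
    (x : A) (hx : 0 ≤ x) :
    ∃ φ ∈ (stateSet e).extremePoints ℝ, φ x = ‖x‖ := by
  -- the attaining state
  obtain ⟨φ₀', hpos₀, hφ₀e, hφ₀x⟩ := exists_state he hne hOU hAM x hx
  have hb₀ : ∀ z : A, ‖φ₀' z‖ ≤ 1 * ‖z‖ := by
    intro z
    rw [one_mul, Real.norm_eq_abs, abs_le]
    have k1 : φ₀' z ≤ φ₀' |z| := by
      have := hpos₀ _ (sub_nonneg.2 (le_abs_self z)); rw [map_sub] at this; linarith
    have k2 : -φ₀' z ≤ φ₀' |z| := by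
      have := hpos₀ _ (sub_nonneg.2 (neg_le_abs z)); rw [map_sub, map_neg] at this; linarith
    have k3 : φ₀' |z| ≤ ‖z‖ := by
      have := hpos₀ _ (sub_nonneg.2 (abs_le_norm_smul hOU hAM z))
      rw [map_sub, map_smul, smul_eq_mul, hφ₀e, mul_one] at this
      linarith
    constructor <;> linarith
  set φ₀ : WeakDual ℝ A := LinearMap.mkContinuous φ₀' 1 hb₀ with hφ₀
  have hφ₀S : φ₀ ∈ stateSet e := ⟨fun a ha => hpos₀ a ha, hφ₀e⟩
  -- the exposed face
  set B : Set (WeakDual ℝ A) := stateSet e ∩ {φ : WeakDual ℝ A | ‖x‖ ≤ φ x} with hB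
  have hBsub : B ⊆ stateSet e := fun φ hφ => hφ.1
  have hBne : B.Nonempty := ⟨φ₀, hφ₀S, ge_of_eq hφ₀x⟩
  have hstate_le : ∀ φ ∈ stateSet e, φ x ≤ ‖x‖ := by
    intro φ hφ
    have := state_bound hOU hAM hφ x
    rw [abs_le] at this
    exact this.2
  have hBexp : IsExposed ℝ (stateSet e) B := by
    intro _
    refine ⟨{ toFun := fun φ => φ x
              map_add' := fun _ _ => rfl
              map_smul' := fun _ _ => rfl
              cont := WeakDual.eval_continuous x }, ?_⟩
    ext φ
    constructor
    · rintro ⟨hφS, hφx⟩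
      exact ⟨hφS, fun ψ hψ => le_trans (hstate_le ψ hψ) hφx⟩
    · rintro ⟨hφS, hmax⟩
      exact ⟨hφS, hφ₀x ▸ hmax φ₀ hφ₀S⟩
  have hBclosed : IsClosed B :=
    stateSet_closed.inter (isClosed_le continuous_const (WeakDual.eval_continuous x))
  have hBcompact : IsCompact B :=
    (stateSet_compact hOU hAM).of_isClosed_subset hBclosed hBsub
  have : LocallyConvexSpace ℝ (WeakDual ℝ A) := WeakBilin.locallyConvexSpace
  obtain ⟨φ, hφB⟩ := hBcompact.extremePoints_nonempty hBne
  refine ⟨φ, ?_, ?_⟩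
  · exact hBexp.isExtreme.extremePoints_subset_extremePoints hφB
  · exact le_antisymm (hstate_le φ (hBsub hφB.1)) hφB.1.2


/-- An extreme state dominates only its own multiples. -/
theorem extreme_dominated
    (he : 0 ≤ e)
    (hOU : ∀ x : A, ∃ l : ℝ, 0 ≤ l ∧ |x| ≤ l • e)
    (hAM : ∀ x : A, ‖x‖ = sInf {l : ℝ | 0 < l ∧ |x| ≤ l • e})
    {φ : WeakDual ℝ A} (hφ : φ ∈ (stateSet e).extremePoints ℝ)
    (ψ : A →ₗ[ℝ] ℝ) (hψ0 : ∀ a : A, 0 ≤ a → 0 ≤ ψ a) (hψφ : ∀ a : A, 0 ≤ a → ψ a ≤ φ a) :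
    ∀ a : A, ψ a = ψ e * φ a := by
  obtain ⟨hφS, hext⟩ := (mem_extremePoints).1 hφ
  have hφe : φ e = 1 := hφS.2
  have hψmono : ∀ a b : A, a ≤ b → ψ a ≤ ψ b := fun a b h => by
    have := hψ0 _ (sub_nonneg.2 h); rw [map_sub] at this; linarith
  have hψbound : ∀ z : A, ‖ψ z‖ ≤ 1 * ‖z‖ := by
    intro z
    rw [one_mul, Real.norm_eq_abs, abs_le]
    have k1 : ψ z ≤ ψ |z| := hψmono _ _ (le_abs_self z)
    have k2 : -ψ z ≤ ψ |z| := by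
      have := hψmono _ _ (neg_le_abs z); rwa [map_neg] at this
    have k3 : ψ |z| ≤ φ |z| := hψφ _ (abs_nonneg z)
    have k4 : φ |z| ≤ ‖z‖ := by
      have := state_mono hφS (abs_le_norm_smul hOU hAM z)
      rwa [map_smul, smul_eq_mul, hφe, mul_one] at this
    constructor <;> linarith
  -- the zero case helper
  have zero_case : ∀ χ : A →ₗ[ℝ] ℝ, (∀ a : A, 0 ≤ a → 0 ≤ χ a) → χ e = 0 → ∀ a : A, χ a = 0 := by
    intro χ h0 hχe a
    have key : ∀ b : A, 0 ≤ b → χ b = 0 := by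
      intro b hb
      have hble : b ≤ ‖b‖ • e := le_trans (le_abs_self b) (abs_le_norm_smul hOU hAM b)
      have h1 : χ b ≤ χ (‖b‖ • e) := by
        have := h0 _ (sub_nonneg.2 hble); rw [map_sub] at this; linarith
      rw [map_smul, smul_eq_mul, hχe, mul_zero] at h1
      exact le_antisymm h1 (h0 b hb)
    have hdecomp : a = a⁺ - a⁻ := (posPart_sub_negPart a).symm
    rw [hdecomp, map_sub, key _ (posPart_nonneg a), key _ (negPart_nonneg a), sub_zero]
  set t := ψ e with ht
  have ht0 : 0 ≤ t := hψ0 e he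
  have ht1 : t ≤ 1 := by have := hψφ e he; rw [hφe] at this; exact this
  rcases ht0.eq_or_lt with h0 | h0
  · intro a
    rw [← h0, zero_mul]
    exact zero_case ψ hψ0 h0.symm a
  rcases ht1.eq_or_lt with h1 | h1
  · -- t = 1 : consider φ - ψ
    set χ : A →ₗ[ℝ] ℝ :=
      { toFun := fun a => φ a - ψ a
        map_add' := fun a b => by simp only [map_add]; ring
        map_smul' := fun c a => by simp only [map_smul, smul_eq_mul, RingHom.id_apply]; ring }
    have hχ0 : ∀ a : A, 0 ≤ a → 0 ≤ χ a := fun a ha => sub_nonneg.2 (hψφ a ha)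
    have hχe : χ e = 0 := by
      show φ e - ψ e = 0
      rw [hφe, ← ht, ← h1, sub_self]
    intro a
    have := zero_case χ hχ0 hχe a
    have h2 : φ a - ψ a = 0 := this
    rw [h1, one_mul]
    linarith
  · -- 0 < t < 1
    set Ψ : WeakDual ℝ A := LinearMap.mkContinuous ψ 1 hψbound with hΨdef
    have hΨ : ∀ a : A, Ψ a = ψ a := fun a => rfl
    set φ₁ : WeakDual ℝ A := t⁻¹ • Ψ with hφ₁def
    set φ₂ : WeakDual ℝ A := (1 - t)⁻¹ • (φ - Ψ) with hφ₂def
    have hφ₁ : ∀ a : A, φ₁ a = t⁻¹ * ψ a := fun a => rfl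
    have hφ₂ : ∀ a : A, φ₂ a = (1 - t)⁻¹ * (φ a - ψ a) := fun a => rfl
    have hφ₁S : φ₁ ∈ stateSet e := by
      constructor
      · intro a ha
        rw [hφ₁]
        have := hψ0 a ha
        positivity
      · rw [hφ₁, ← ht, inv_mul_cancel₀ h0.ne']
    have hφ₂S : φ₂ ∈ stateSet e := by
      constructor
      · intro a ha
        rw [hφ₂]
        have h2 := hψφ a ha
        have h3 : (0:ℝ) < (1 - t)⁻¹ := inv_pos.2 (by linarith)
        nlinarith
      · rw [hφ₂, hφe, ← ht, inv_mul_cancel₀ (by linarith : (1:ℝ) - t ≠ 0)]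
    have hseg : φ ∈ openSegment ℝ φ₁ φ₂ := by
      refine ⟨t, 1 - t, h0, by linarith, by ring, ?_⟩
      apply DFunLike.ext
      intro a
      have : (t • φ₁ + (1 - t) • φ₂) a = t * (t⁻¹ * ψ a) + (1 - t) * ((1 - t)⁻¹ * (φ a - ψ a)) := rfl
      rw [this, ← mul_assoc, ← mul_assoc, mul_inv_cancel₀ h0.ne',
        mul_inv_cancel₀ (by linarith : (1:ℝ) - t ≠ 0)]
      ring
    obtain ⟨hφ₁eq, _⟩ := hext φ₁ hφ₁S φ₂ hφ₂S hseg
    intro a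
    have h2 : φ₁ a = φ a := by rw [hφ₁eq]
    rw [hφ₁] at h2
    calc ψ a = t * (t⁻¹ * ψ a) := by rw [← mul_assoc, mul_inv_cancel₀ h0.ne', one_mul]
      _ = t * φ a := by rw [h2]


open Filter in
/-- Extreme states vanish on one of two disjoint positive elements. -/
theorem extreme_disjoint
    (he : 0 ≤ e)
    (hOU : ∀ x : A, ∃ l : ℝ, 0 ≤ l ∧ |x| ≤ l • e)
    (hAM : ∀ x : A, ‖x‖ = sInf {l : ℝ | 0 < l ∧ |x| ≤ l • e})
    {φ : WeakDual ℝ A} (hφ : φ ∈ (stateSet e).extremePoints ℝ)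
    {u v : A} (hu : 0 ≤ u) (hv : 0 ≤ v) (huv : u ⊓ v = 0) :
    φ u = 0 ∨ φ v = 0 := by
  have hφS : φ ∈ stateSet e := hφ.1
  have hmono : ∀ a b : A, a ≤ b → φ a ≤ φ b := fun a b h => state_mono hφS h
  -- the monotone approximating sequence
  set F : A → ℕ → ℝ := fun a n => φ (a ⊓ (n : ℝ) • u) with hF
  have hsm : ∀ a : A, ∀ n m : ℕ, n ≤ m → a ⊓ (n : ℝ) • u ≤ a ⊓ (m : ℝ) • u := fun a n m h =>
    inf_le_inf_left a (smul_le_smul_of_nonneg_right (by exact_mod_cast h) hu)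
  have hFmono : ∀ a : A, Monotone (F a) := fun a n m h => hmono _ _ (hsm a n m h)
  have hFle : ∀ a : A, ∀ n, F a n ≤ φ a := fun a n => hmono _ _ inf_le_left
  have hFbdd : ∀ a : A, BddAbove (Set.range (F a)) := fun a =>
    ⟨φ a, by rintro _ ⟨n, rfl⟩; exact hFle a n⟩
  set q : A → ℝ := fun a => ⨆ n, F a n with hq
  have hqt : ∀ a : A, Tendsto (F a) atTop (nhds (q a)) := fun a =>
    tendsto_atTop_ciSup (hFmono a) (hFbdd a)
  have hqle : ∀ a : A, q a ≤ φ a := fun a => ciSup_le (hFle a)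
  have hq0 : ∀ a : A, 0 ≤ a → 0 ≤ q a := by
    intro a ha
    have h1 : F a 0 = 0 := by
      simp [hF, inf_eq_right.2 ha]
    have := le_ciSup (hFbdd a) 0
    rw [h1] at this
    exact this
  -- additivity on the positive cone
  have hq_add : ∀ a b : A, 0 ≤ a → 0 ≤ b → q (a + b) = q a + q b := by
    intro a b ha hb
    have h1 : q (a + b) ≤ q a + q b := by
      refine le_of_tendsto_of_tendsto' (hqt (a + b)) ((hqt a).add (hqt b)) fun n => ?_
      have hkey := inf_add_le (a := a) (b := b) (c := (n : ℝ) • u) ha hb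
        (smul_nonneg (by positivity) hu)
      have := hmono _ _ hkey
      rw [map_add] at this
      exact this
    have h2 : q a + q b ≤ q (a + b) := by
      have hcomp : Tendsto (fun n : ℕ => F (a + b) (2 * n)) atTop (nhds (q (a + b))) := by
        refine (hqt (a + b)).comp ?_
        exact tendsto_atTop_atTop_of_monotone (fun x y h => by omega) (fun n => ⟨n, by omega⟩)
      refine le_of_tendsto_of_tendsto' ((hqt a).add (hqt b)) hcomp fun n => ?_
      have hsum : a ⊓ (n : ℝ) • u + b ⊓ (n : ℝ) • u ≤ (a + b) ⊓ ((2 * n : ℕ) : ℝ) • u := by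
        refine le_inf (add_le_add inf_le_left inf_le_left) ?_
        have : ((2 * n : ℕ) : ℝ) • u = (n : ℝ) • u + (n : ℝ) • u := by
          rw [← add_smul]; push_cast; ring_nf
        rw [this]
        exact add_le_add inf_le_right inf_le_right
      have := hmono _ _ hsum
      rw [map_add] at this
      exact this
    linarith
  -- positive homogeneity
  have hq_smul : ∀ c : ℝ, 0 < c → ∀ a : A, q (c • a) = c * q a := by
    have step : ∀ c : ℝ, 0 < c → ∀ a : A, c * q a ≤ q (c • a) := by
      intro c hc a
      have h1 : Tendsto (fun n => c * F a n) atTop (nhds (c * q a)) := (hqt a).const_mul c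
      refine le_of_tendsto h1 (Eventually.of_forall fun n => ?_)
      have e1 : c • (a ⊓ (n : ℝ) • u) = (c • a) ⊓ ((c * n) • u) := by
        have := (OrderIso.smulRight (β := A) hc).map_inf a ((n : ℝ) • u)
        simp only [OrderIso.smulRight_apply] at this
        rw [this, smul_smul]
      have e2 : (c • a) ⊓ ((c * n) • u) ≤ (c • a) ⊓ ((⌈c * n⌉₊ : ℝ) • u) :=
        inf_le_inf_left _ (smul_le_smul_of_nonneg_right (Nat.le_ceil _) hu)
      calc c * F a n = φ (c • (a ⊓ (n : ℝ) • u)) := by rw [map_smul, smul_eq_mul]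
        _ ≤ φ ((c • a) ⊓ ((⌈c * n⌉₊ : ℝ) • u)) := hmono _ _ (e1 ▸ e2)
        _ ≤ q (c • a) := le_ciSup (hFbdd (c • a)) _
    intro c hc a
    have h1 := step c hc a
    have h2 := step c⁻¹ (by positivity) (c • a)
    rw [smul_smul, inv_mul_cancel₀ hc.ne', one_smul] at h2
    have h3 := mul_le_mul_of_nonneg_left h2 hc.le
    rw [← mul_assoc, mul_inv_cancel₀ hc.ne', one_mul] at h3
    linarith
  have hqzero : q 0 = 0 := by
    have h1 : ∀ n, F 0 n = 0 := fun n => by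
      have : (0 : A) ⊓ (n : ℝ) • u = 0 := inf_eq_left.2 (smul_nonneg (by positivity) hu)
      simp [hF, this]
    simp [hq, h1]
  -- build the linear functional ψ
  have hψadd : ∀ x y : A, q (x + y)⁺ - q (x + y)⁻ = (q x⁺ - q x⁻) + (q y⁺ - q y⁻) := by
    intro x y
    have hid : (x + y)⁺ + (x⁻ + y⁻) = (x + y)⁻ + (x⁺ + y⁺) := by
      have h1 : (x + y)⁺ - (x + y)⁻ = (x⁺ - x⁻) + (y⁺ - y⁻) := by
        rw [posPart_sub_negPart, posPart_sub_negPart, posPart_sub_negPart]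
      have h2 : (x + y)⁺ + (x⁻ + y⁻) - ((x + y)⁻ + (x⁺ + y⁺)) =
          ((x + y)⁺ - (x + y)⁻) - ((x⁺ - x⁻) + (y⁺ - y⁻)) := by abel
      rw [h1, sub_self] at h2
      exact sub_eq_zero.1 h2
    have h3 : q ((x + y)⁺ + (x⁻ + y⁻)) = q (x + y)⁺ + (q x⁻ + q y⁻) := by
      rw [hq_add _ _ (posPart_nonneg _) (add_nonneg (negPart_nonneg _) (negPart_nonneg _)),
        hq_add _ _ (negPart_nonneg _) (negPart_nonneg _)]
    have h4 : q ((x + y)⁻ + (x⁺ + y⁺)) = q (x + y)⁻ + (q x⁺ + q y⁺) := by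
      rw [hq_add _ _ (negPart_nonneg _) (add_nonneg (posPart_nonneg _) (posPart_nonneg _)),
        hq_add _ _ (posPart_nonneg _) (posPart_nonneg _)]
    rw [hid, h4] at h3
    linarith
  have hψsmul : ∀ (c : ℝ) (x : A), q (c • x)⁺ - q (c • x)⁻ = c * (q x⁺ - q x⁻) := by
    intro c x
    rcases lt_trichotomy c 0 with h | h | h
    · have hpos : 0 < -c := by linarith
      have e1 : (c • x)⁺ = (-c) • x⁻ := by
        have h1 : c • x = (-c) • (-x) := by rw [neg_smul, smul_neg, neg_neg]
        rw [h1, smul_posPart hpos, posPart_neg]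
      have e2 : (c • x)⁻ = (-c) • x⁺ := by
        have h1 : c • x = (-c) • (-x) := by rw [neg_smul, smul_neg, neg_neg]
        rw [h1, smul_negPart hpos, negPart_neg]
      rw [e1, e2, hq_smul _ hpos, hq_smul _ hpos]
      ring
    · subst h
      simp [hqzero]
    · rw [smul_posPart h, smul_negPart h, hq_smul _ h, hq_smul _ h]
      ring
  set ψ : A →ₗ[ℝ] ℝ :=
    { toFun := fun x => q x⁺ - q x⁻
      map_add' := hψadd
      map_smul' := fun c x => by simpa using hψsmul c x } with hψdef
  have hψa : ∀ a : A, 0 ≤ a → ψ a = q a := by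
    intro a ha
    show q a⁺ - q a⁻ = q a
    rw [posPart_eq_self.2 ha, negPart_eq_zero.2 ha, hqzero, sub_zero]
  have hψ0 : ∀ a : A, 0 ≤ a → 0 ≤ ψ a := fun a ha => by rw [hψa a ha]; exact hq0 a ha
  have hψφ : ∀ a : A, 0 ≤ a → ψ a ≤ φ a := fun a ha => by rw [hψa a ha]; exact hqle a
  have hdom := extreme_dominated he hOU hAM hφ ψ hψ0 hψφ
  -- compute ψ u and ψ v
  have hψu : ψ u = φ u := by
    rw [hψa u hu]
    refine le_antisymm (hqle u) ?_
    have h1 : F u 1 = φ u := by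
      have : u ⊓ (1 : ℝ) • u = u := by rw [one_smul, inf_idem]
      simp [hF, this]
    have := le_ciSup (hFbdd u) 1
    rw [h1] at this
    exact this
  have hψv : ψ v = 0 := by
    rw [hψa v hv]
    have h1 : ∀ n : ℕ, v ⊓ (n : ℝ) • u = 0 := by
      intro n
      induction n with
      | zero => rw [Nat.cast_zero, zero_smul, inf_eq_right.2 hv]
      | succ n ih =>
        have h2 : ((n + 1 : ℕ) : ℝ) • u = (n : ℝ) • u + u := by
          push_cast
          rw [add_smul, one_smul]
        have h3 : ((n : ℝ) • u + u) ⊓ v ≤ ((n : ℝ) • u) ⊓ v + u ⊓ v :=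
          inf_add_le (smul_nonneg (by positivity) hu) hu hv
        rw [inf_comm ((n : ℝ) • u) v, ih, huv, add_zero] at h3
        have h4 : (0 : A) ≤ ((n : ℝ) • u + u) ⊓ v :=
          le_inf (add_nonneg (smul_nonneg (by positivity) hu) hu) hv
        rw [h2, inf_comm]
        exact le_antisymm h3 h4
    have h2 : ∀ n, F v n = 0 := fun n => by simp [hF, h1 n]
    simp [hq, h2]
  -- conclude
  have hd1 : φ u = ψ e * φ u := hψu ▸ hdom u
  have hd2 : (0 : ℝ) = ψ e * φ v := hψv ▸ hdom v
  by_cases hφu : φ u = 0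
  · exact Or.inl hφu
  · have hψe : ψ e = 1 := by
      have : (1 - ψ e) * φ u = 0 := by linarith [hd1]
      rcases mul_eq_zero.1 this with h | h
      · linarith
      · exact absurd h hφu
    right
    rw [hψe, one_mul] at hd2
    exact hd2.symm


theorem state_posPart {φ : WeakDual ℝ A} (hφS : φ ∈ stateSet e)
    (hmin : ∀ u v : A, 0 ≤ u → 0 ≤ v → u ⊓ v = 0 → φ u = 0 ∨ φ v = 0) (x : A) :
    φ x⁺ = (φ x)⁺ := by
  have hx : φ x = φ x⁺ - φ x⁻ := by rw [← map_sub, posPart_sub_negPart]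
  have h1 := hmin x⁺ x⁻ (posPart_nonneg x) (negPart_nonneg x) (posPart_inf_negPart_eq_zero x)
  have hp : 0 ≤ φ x⁺ := hφS.1 _ (posPart_nonneg x)
  have hn : 0 ≤ φ x⁻ := hφS.1 _ (negPart_nonneg x)
  rcases h1 with h | h
  · have h2 : (φ x)⁺ = 0 := posPart_eq_zero.2 (by rw [hx, h]; linarith)
    rw [h2, h]
  · have h2 : (φ x)⁺ = φ x := posPart_eq_self.2 (by rw [hx, h]; linarith)
    rw [h2, hx, h, sub_zero]

theorem state_negPart {φ : WeakDual ℝ A} (hφS : φ ∈ stateSet e)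
    (hmin : ∀ u v : A, 0 ≤ u → 0 ≤ v → u ⊓ v = 0 → φ u = 0 ∨ φ v = 0) (x : A) :
    φ x⁻ = (φ x)⁻ := by
  have h1 : x⁻ = (-x)⁺ := (posPart_neg x).symm
  rw [h1, state_posPart hφS hmin, map_neg]
  exact (posPart_neg (φ x)).symm

theorem state_sup {φ : WeakDual ℝ A} (hφS : φ ∈ stateSet e)
    (hmin : ∀ u v : A, 0 ≤ u → 0 ≤ v → u ⊓ v = 0 → φ u = 0 ∨ φ v = 0) (x y : A) :
    φ (x ⊔ y) = φ x ⊔ φ y := by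
  have key : ∀ (a b : A), a ⊔ b = a + (b - a)⁺ := by
    intro a b
    have h : a + ((b - a) ⊔ 0) = (a + (b - a)) ⊔ (a + 0) :=
      (OrderIso.addLeft a).map_sup (b - a) 0
    have h2 : a + (b - a) = b := by abel
    rw [h2, add_zero] at h
    rw [sup_comm a b, ← h]
    rfl
  have keyR : ∀ (a b : ℝ), a ⊔ b = a + (b - a)⁺ := by
    intro a b
    rcases le_total a b with h | h
    · rw [sup_eq_right.2 h, posPart_eq_self.2 (sub_nonneg.2 h)]; ring
    · rw [sup_eq_left.2 h, posPart_eq_zero.2 (sub_nonpos.2 h), add_zero]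
  rw [key, map_add, state_posPart hφS hmin, map_sub, keyR (φ x) (φ y)]

theorem state_abs {φ : WeakDual ℝ A} (hφS : φ ∈ stateSet e)
    (hmin : ∀ u v : A, 0 ≤ u → 0 ≤ v → u ⊓ v = 0 → φ u = 0 ∨ φ v = 0) (x : A) :
    φ |x| = |φ x| := by
  have h1 : |x| = x⁺ + x⁻ := (posPart_add_negPart x).symm
  have h2 : |φ x| = (φ x)⁺ + (φ x)⁻ := (posPart_add_negPart (φ x)).symm
  rw [h1, map_add, state_posPart hφS hmin, state_negPart hφS hmin, h2]

end AMAlgAux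

open AMAlgAux in
/-- Every AM-algebra with unit is algebra and lattice isometric to a
`C(K)` space, for a certain compact Hausdorff space `K`. -/
theorem am_algebra_lattice_algebra_isometric_to_CK
    {A : Type u} [NormedAddCommGroup A] [Lattice A] [IsOrderedAddMonoid A] [HasSolidNorm A]
    [NormedSpace ℝ A]
    [PosSMulStrictMono ℝ A] [PosSMulReflectLT ℝ A] [CompleteSpace A]
    -- Banach lattice algebra structure
    (mul : A →ₗ[ℝ] A →ₗ[ℝ] A)
    (mul_assoc : ∀ a b c : A, mul (mul a b) c = mul a (mul b c))
    (norm_mul_le : ∀ a b : A, ‖mul a b‖ ≤ ‖a‖ * ‖b‖)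
    (mul_nonneg : ∀ a b : A, 0 ≤ a → 0 ≤ b → 0 ≤ mul a b)
    -- identity of norm one
    (e : A) (one_mul : ∀ a : A, mul e a = a) (mul_one : ∀ a : A, mul a e = a)
    (norm_e : ‖e‖ = 1)
    -- AM-space with unit `e`
    (order_unit : ∀ x : A, ∃ l : ℝ, 0 ≤ l ∧ |x| ≤ l • e)
    (am_norm : ∀ x : A, ‖x‖ = sInf {l : ℝ | 0 < l ∧ |x| ≤ l • e}) :
    ∃ (K : Type u) (_ : TopologicalSpace K) (_ : CompactSpace K) (_ : T2Space K)
      (T : A →ₗ[ℝ] C(K, ℝ)),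
      Function.Bijective T ∧
      (∀ x : A, ‖T x‖ = ‖x‖) ∧
      (∀ x y : A, T (mul x y) = T x * T y) ∧
      (∀ x y : A, T (x ⊔ y) = T x ⊔ T y) ∧
      T e = 1 := by
  classical
  have he : (0 : A) ≤ e := e_nonneg order_unit
  -- the set of lattice states
  set KS : Set (WeakDual ℝ A) :=
    {φ : WeakDual ℝ A | φ ∈ stateSet e ∧
      ∀ u v : A, 0 ≤ u → 0 ≤ v → u ⊓ v = 0 → φ u = 0 ∨ φ v = 0} with hKS
  have hKSsub : KS ⊆ stateSet e := fun φ hφ => hφ.1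
  have hKSclosed : IsClosed KS := by
    have heq : KS = stateSet e ∩
        ⋂ (u : A) (v : A) (_ : 0 ≤ u) (_ : 0 ≤ v) (_ : u ⊓ v = 0),
          ({φ : WeakDual ℝ A | φ u = 0} ∪ {φ : WeakDual ℝ A | φ v = 0}) := by
      ext φ
      simp only [hKS, Set.mem_setOf_eq, Set.mem_inter_iff, Set.mem_iInter, Set.mem_union]
    rw [heq]
    refine stateSet_closed.inter ?_
    refine isClosed_iInter fun u => isClosed_iInter fun v => ?_
    refine isClosed_iInter fun _ => isClosed_iInter fun _ => isClosed_iInter fun _ => ?_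
    exact (isClosed_eq (WeakDual.eval_continuous u) continuous_const).union
      (isClosed_eq (WeakDual.eval_continuous v) continuous_const)
  have hKScompact : IsCompact KS :=
    (stateSet_compact order_unit am_norm).of_isClosed_subset hKSclosed hKSsub
  have hext_mem : ∀ φ ∈ (stateSet e).extremePoints ℝ, φ ∈ KS := fun φ hφ =>
    ⟨hφ.1, fun u v hu hv huv => extreme_disjoint he order_unit am_norm hφ hu hv huv⟩
  -- the compact Hausdorff space
  haveI : CompactSpace ↥KS := isCompact_iff_compactSpace.1 hKScompact
  refine ⟨↥KS, inferInstance, inferInstance, inferInstance, ?_⟩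
  -- the map T
  set T : A →ₗ[ℝ] C(↥KS, ℝ) :=
    { toFun := fun x =>
        ⟨fun φ => (φ : WeakDual ℝ A) x,
          (WeakDual.eval_continuous x).comp continuous_subtype_val⟩
      map_add' := fun x y => by ext φ; exact map_add (φ : WeakDual ℝ A) x y
      map_smul' := fun c x => by ext φ; exact map_smul (φ : WeakDual ℝ A) c x } with hT
  have hTapp : ∀ (x : A) (φ : ↥KS), T x φ = (φ : WeakDual ℝ A) x := fun x φ => rfl
  -- norm identity
  have hTnorm : ∀ x : A, ‖T x‖ = ‖x‖ := by
    intro x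
    refine le_antisymm ((ContinuousMap.norm_le _ (norm_nonneg x)).2 fun φ => ?_) ?_
    · rw [hTapp, Real.norm_eq_abs]
      exact state_bound order_unit am_norm (hKSsub φ.2) x
    · obtain ⟨φ, hφext, hφx⟩ :=
        exists_extreme_state he norm_e order_unit am_norm |x| (abs_nonneg x)
      have hφKS : φ ∈ KS := hext_mem φ hφext
      have habs : φ |x| = |φ x| := state_abs hφext.1 hφKS.2 x
      calc ‖x‖ = ‖φ x‖ := by rw [Real.norm_eq_abs, ← habs, hφx, norm_abs_eq_norm]
        _ ≤ ‖T x‖ := (T x).norm_coe_le_norm ⟨φ, hφKS⟩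
  -- T e = 1
  have hTe : T e = 1 := by
    ext φ
    exact φ.2.1.2
  -- multiplicativity
  have hmul_states : ∀ φ : WeakDual ℝ A, φ ∈ KS → ∀ x y : A, φ (mul x y) = φ x * φ y := by
    intro φ hφ
    have hφS := hφ.1
    have hφe : φ e = 1 := hφS.2
    have hmono : ∀ a b : A, a ≤ b → φ a ≤ φ b := fun a b h => state_mono hφS h
    have hmulmono : ∀ (a b y : A), 0 ≤ y → a ≤ b → mul a y ≤ mul b y := by
      intro a b y hy hab
      have h1 : (0 : A) ≤ mul (b - a) y := mul_nonneg _ _ (sub_nonneg.2 hab) hy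
      have h2 : mul (b - a) y = mul b y - mul a y := by
        rw [map_sub, LinearMap.sub_apply]
      rw [h2] at h1
      exact sub_nonneg.1 h1
    have m1 : ∀ h y : A, 0 ≤ h → 0 ≤ y → φ h = 0 → φ (mul h y) = 0 := by
      intro h y hh hy hφh
      have hyle : y ≤ ‖y‖ • e := le_trans (le_abs_self y) (abs_le_norm_smul order_unit am_norm y)
      have h1 : mul h y ≤ mul h (‖y‖ • e) := by
        have h2 : (0 : A) ≤ mul h (‖y‖ • e - y) := mul_nonneg _ _ hh (sub_nonneg.2 hyle)
        rw [map_sub] at h2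
        exact sub_nonneg.1 h2
      have h2 : mul h (‖y‖ • e) = ‖y‖ • h := by rw [map_smul, mul_one]
      rw [h2] at h1
      have h3 := hmono _ _ h1
      rw [map_smul, smul_eq_mul, hφh, mul_zero] at h3
      exact le_antisymm h3 (hφS.1 _ (mul_nonneg _ _ hh hy))
    have step : ∀ x y : A, 0 ≤ x → 0 ≤ y → φ (mul x y) = φ x * φ y := by
      intro x y hx hy
      set t := φ x with htdef
      have ht : 0 ≤ t := hφS.1 x hx
      have hφte : φ (t • e) = t := by rw [map_smul, smul_eq_mul, hφe, _root_.mul_one]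
      -- upper bound
      have hup : φ (mul x y) ≤ t * φ y := by
        set h₁ : A := (x - t • e)⁺ with hh₁
        have hφh₁ : φ h₁ = 0 := by
          rw [hh₁, state_posPart hφS hφ.2, map_sub, hφte, ← htdef, sub_self]
          exact posPart_eq_zero.2 le_rfl
        have hxle : x ≤ t • e + h₁ :=
          sub_le_iff_le_add'.1 (le_posPart (x - t • e))
        have h1 : mul x y ≤ mul (t • e + h₁) y := hmulmono _ _ _ hy hxle
        have h2 : mul (t • e + h₁) y = t • y + mul h₁ y := by
          rw [map_add, map_smul, LinearMap.add_apply, LinearMap.smul_apply, one_mul]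
        rw [h2] at h1
        have h3 := hmono _ _ h1
        rw [map_add, map_smul, smul_eq_mul, m1 h₁ y (posPart_nonneg _) hy hφh₁, add_zero] at h3
        exact h3
      -- lower bound
      have hlow : t * φ y ≤ φ (mul x y) := by
        set h₂ : A := (t • e - x)⁺ with hh₂
        have hφh₂ : φ h₂ = 0 := by
          rw [hh₂, state_posPart hφS hφ.2, map_sub, hφte, ← htdef, sub_self]
          exact posPart_eq_zero.2 le_rfl
        have hxge : t • e - h₂ ≤ x :=
          sub_le_comm.1 (le_posPart (t • e - x))
        have h1 : mul (t • e - h₂) y ≤ mul x y := hmulmono _ _ _ hy hxge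
        have h2 : mul (t • e - h₂) y = t • y - mul h₂ y := by
          rw [map_sub, map_smul, LinearMap.sub_apply, LinearMap.smul_apply, one_mul]
        rw [h2] at h1
        have h3 := hmono _ _ h1
        rw [map_sub, map_smul, smul_eq_mul, m1 h₂ y (posPart_nonneg _) hy hφh₂, sub_zero] at h3
        exact h3
      linarith
    intro x y
    have hxy : mul x y =
        mul x⁺ y⁺ - mul x⁺ y⁻ - (mul x⁻ y⁺ - mul x⁻ y⁻) := by
      conv_lhs => rw [← posPart_sub_negPart x, ← posPart_sub_negPart y]
      simp only [map_sub, LinearMap.sub_apply]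
      abel
    have hφx : φ x = φ x⁺ - φ x⁻ := by rw [← map_sub, posPart_sub_negPart]
    have hφy : φ y = φ y⁺ - φ y⁻ := by rw [← map_sub, posPart_sub_negPart]
    rw [hxy]
    simp only [map_sub]
    rw [step _ _ (posPart_nonneg _) (posPart_nonneg _),
      step _ _ (posPart_nonneg _) (negPart_nonneg _),
      step _ _ (negPart_nonneg _) (posPart_nonneg _),
      step _ _ (negPart_nonneg _) (negPart_nonneg _), hφx, hφy]
    ring
  have hTmul : ∀ x y : A, T (mul x y) = T x * T y := by
    intro x y
    ext φ
    rw [ContinuousMap.mul_apply, hTapp, hTapp, hTapp]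
    exact hmul_states φ.1 φ.2 x y
  -- lattice homomorphism
  have hTsup : ∀ x y : A, T (x ⊔ y) = T x ⊔ T y := by
    intro x y
    ext φ
    rw [ContinuousMap.sup_apply, hTapp, hTapp, hTapp]
    exact state_sup φ.2.1 φ.2.2 x y
  -- injectivity
  have hinj : Function.Injective T := by
    intro x y hxy
    have h1 : ‖x - y‖ = 0 := by rw [← hTnorm, map_sub, hxy, sub_self, norm_zero]
    exact sub_eq_zero.1 (norm_eq_zero.1 h1)
  -- surjectivity via Stone-Weierstrass
  have hsurj : Function.Surjective T := by
    let R : Subalgebra ℝ C(↥KS, ℝ) :=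
      { carrier := Set.range T
        mul_mem' := by rintro f g ⟨a, rfl⟩ ⟨b, rfl⟩; exact ⟨mul a b, hTmul a b⟩
        one_mem' := ⟨e, hTe⟩
        add_mem' := by rintro f g ⟨a, rfl⟩ ⟨b, rfl⟩; exact ⟨a + b, map_add T a b⟩
        zero_mem' := ⟨0, map_zero T⟩
        algebraMap_mem' := fun r =>
          ⟨r • e, by rw [map_smul, hTe]; ext φ; simp [Algebra.algebraMap_eq_smul_one]⟩ }
    have hsep : R.SeparatesPoints := by
      intro φ ψ hne
      have h1 : (φ : WeakDual ℝ A) ≠ (ψ : WeakDual ℝ A) := fun h => hne (Subtype.ext h)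
      have h2 : ∃ a : A, (φ : WeakDual ℝ A) a ≠ (ψ : WeakDual ℝ A) a := by
        by_contra hc
        push_neg at hc
        exact h1 (DFunLike.ext _ _ hc)
      obtain ⟨a, ha⟩ := h2
      exact ⟨⇑(T a), ⟨T a, ⟨a, rfl⟩, rfl⟩, ha⟩
    have hclosed : IsClosed (R : Set C(↥KS, ℝ)) :=
      (AddMonoidHomClass.isometry_of_norm T hTnorm).isClosedEmbedding.isClosed_range
    intro f
    have h1 := ContinuousMap.subalgebra_topologicalClosure_eq_top_of_separatesPoints R hsep
    have h2 : f ∈ R.topologicalClosure := h1 ▸ Algebra.mem_top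
    have h3 : f ∈ closure (R : Set C(↥KS, ℝ)) := h2
    rw [hclosed.closure_eq] at h3
    exact h3
  exact ⟨T, ⟨hinj, hsurj⟩, hTnorm, hTmul, hTsup, hTe⟩
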